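/- In ℝ² with the maximum norm, for K = {(0,0)} and L = {(t,1) : t ∈ [−1,1]}, the Chebyshev centers are C(K) = {(0,0)} and C(L) = {(0,t) : t ∈ [0,2]}, and D(C(K), C(L)) = 2 = 2 D(K,L), showing the estimate D(C(K),C(L)) ≤ 2D(K,L) is sharp. -/

import Mathlib

lemma dist_fin2 (y x : Fin 2 → ℝ) : dist y x = max |y 0 - x 0| |y 1 - x 1| := by
  apply le_antisymm
  · refine (dist_pi_le_iff (le_trans (abs_nonneg _) (le_max_left _ _))).2 fun i => ?_
    fin_cases i
    · simp [Real.dist_eq]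
    · simp [Real.dist_eq]
  · refine max_le ?_ ?_
    · simpa [Real.dist_eq] using dist_le_pi_dist y x 0
    · simpa [Real.dist_eq] using dist_le_pi_dist y x 1

def Lset : Set (Fin 2 → ℝ) := {p | p 1 = 1 ∧ p 0 ∈ Set.Icc (-1 : ℝ) 1}

lemma memL : ![0, 1] ∈ Lset := by constructor <;> simp [Lset]

instance : Nonempty ↥Lset := ⟨⟨_, memL⟩⟩

lemma supL (y : Fin 2 → ℝ) :
    (⨆ x : Lset, dist y (x : Fin 2 → ℝ)) = max (|y 0| + 1) (|y 1 - 1|) := by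
  set t : ℝ := if 0 ≤ y 0 then -1 else 1 with ht
  have hw : (![t, 1] : Fin 2 → ℝ) ∈ Lset := by
    constructor
    · simp
    · simp only [Matrix.cons_val_zero]
      rw [ht]; split_ifs <;> norm_num [Set.mem_Icc]
  have hwt : |y 0 - t| = |y 0| + 1 := by
    rw [ht]; split_ifs with h
    · rw [abs_of_nonneg h, abs_of_nonneg (by linarith)]; ring
    · rw [abs_of_neg (not_le.1 h), abs_of_nonpos (by linarith [not_le.1 h])]; ring
  apply IsLUB.ciSup_eq
  constructor
  · rintro r ⟨⟨x, hx1, hx0⟩, rfl⟩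
    simp only [dist_fin2, hx1]
    refine max_le (le_trans ?_ (le_max_left _ _)) (le_max_right _ _)
    calc |y 0 - x 0| ≤ |y 0| + |x 0| := abs_sub _ _
      _ ≤ |y 0| + 1 := by linarith [abs_le.2 ⟨hx0.1, hx0.2⟩]
  · intro b hb
    have h2 : dist y ![t, 1] ≤ b := hb ⟨⟨_, hw⟩, rfl⟩
    rw [dist_fin2] at h2
    simp only [Matrix.cons_val_zero, Matrix.cons_val_one, Matrix.head_cons] at h2
    rwa [hwt] at h2

lemma radL : (⨅ y : Fin 2 → ℝ, ⨆ x : Lset, dist y (x : Fin 2 → ℝ)) = 1 := by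
  simp only [supL]
  apply le_antisymm
  · have := ciInf_le (f := fun y : Fin 2 → ℝ => max (|y 0| + 1) (|y 1 - 1|))
      ⟨1, by rintro _ ⟨y, rfl⟩; exact le_trans (by linarith [abs_nonneg (y 0)]) (le_max_left _ _)⟩ ![0, 1]
    simpa using this
  · exact le_ciInf fun y => le_trans (by linarith [abs_nonneg (y 0)]) (le_max_left _ _)

theorem stmt_8 :
    let M := Fin 2 → ℝ
    let rad : Set M → ℝ := fun A => ⨅ y : M, ⨆ x : A, dist y (x : M)
    let C : Set M → Set M := fun A => {y : M | (⨆ x : A, dist y (x : M)) = rad A}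
    let K : Set M := {![0, 0]}
    let L : Set M := {p : M | p 1 = 1 ∧ p 0 ∈ Set.Icc (-1 : ℝ) 1}
    C K = {![0, 0]} ∧
    C L = {p : M | p 0 = 0 ∧ p 1 ∈ Set.Icc (0 : ℝ) 2} ∧
    Metric.hausdorffDist (C K) (C L) = 2 ∧
    Metric.hausdorffDist K L = 1 ∧
    Metric.hausdorffDist (C K) (C L) = 2 * Metric.hausdorffDist K L := by
  intro M rad C K L
  have hLL : L = Lset := rfl
  have supK : ∀ y : M, (⨆ x : K, dist y (x : M)) = dist y ![0, 0] := fun y => ciSup_unique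
  have radK : rad K = 0 := by
    show (⨅ y : M, ⨆ x : K, dist y (x : M)) = 0
    simp only [supK]
    apply le_antisymm
    · have := ciInf_le (f := fun y : M => dist y ![0, 0])
        ⟨0, by rintro _ ⟨y, rfl⟩; exact dist_nonneg⟩ ![0, 0]
      simpa using this
    · exact le_ciInf fun y => dist_nonneg
  have hCK : C K = {![0, 0]} := by
    ext y
    show (⨆ x : K, dist y (x : M)) = rad K ↔ _
    rw [supK, radK, dist_eq_zero]
    exact ⟨fun h => h, fun h => h⟩
  have hradL : rad L = 1 := by rw [hLL]; exact radL
  have hCL : C L = {p : M | p 0 = 0 ∧ p 1 ∈ Set.Icc (0 : ℝ) 2} := by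
    ext p
    show (⨆ x : L, dist p (x : M)) = rad L ↔ _
    rw [hradL, hLL, supL]
    constructor
    · intro h
      have h1 : |p 0| + 1 ≤ 1 := le_trans (le_max_left _ _) h.le
      have h2 : |p 1 - 1| ≤ 1 := le_trans (le_max_right _ _) h.le
      have h0 : p 0 = 0 := by
        have := abs_nonneg (p 0); have : |p 0| = 0 := by linarith
        exact abs_eq_zero.1 this
      have := abs_le.1 h2
      exact ⟨h0, by constructor <;> linarith [this.1, this.2]⟩
    · rintro ⟨h0, h1, h2⟩
      rw [h0]
      simp only [abs_zero, zero_add]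
      rw [max_eq_left (abs_le.2 ⟨by linarith, by linarith⟩)]
  -- membership and distance facts
  set S : Set M := {p : M | p 0 = 0 ∧ p 1 ∈ Set.Icc (0 : ℝ) 2} with hS
  have hm00 : (![0, 0] : M) ∈ S := by constructor <;> norm_num
  have hm02 : (![0, 2] : M) ∈ S := by constructor <;> norm_num
  have hm01 : (![0, 1] : M) ∈ L := by constructor <;> norm_num
  have hbS : Bornology.IsBounded S := by
    refine Metric.isBounded_closedBall (x := (![0, 0] : M)) (r := 2) |>.subset fun p hp => ?_
    rw [Metric.mem_closedBall, dist_fin2, hp.1]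
    simp only [Matrix.cons_val_zero, Matrix.cons_val_one, Matrix.head_cons, sub_zero, sub_self,
      abs_zero]
    rw [abs_of_nonneg hp.2.1]
    exact max_le (by norm_num) hp.2.2
  have hbL : Bornology.IsBounded L := by
    refine Metric.isBounded_closedBall (x := (![0, 0] : M)) (r := 1) |>.subset fun p hp => ?_
    rw [Metric.mem_closedBall, dist_fin2, hp.1]
    simp only [Matrix.cons_val_zero, Matrix.cons_val_one, Matrix.head_cons, sub_zero]
    exact max_le (abs_le.2 ⟨hp.2.1, hp.2.2⟩) (by norm_num)
  have hneS : EMetric.hausdorffEdist ({![0, 0]} : Set M) S ≠ ⊤ :=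
    Metric.hausdorffEdist_ne_top_of_nonempty_of_bounded ⟨_, rfl⟩ ⟨_, hm00⟩
      Bornology.isBounded_singleton hbS
  have hneL : EMetric.hausdorffEdist ({![0, 0]} : Set M) L ≠ ⊤ :=
    Metric.hausdorffEdist_ne_top_of_nonempty_of_bounded ⟨_, rfl⟩ ⟨_, hm01⟩
      Bornology.isBounded_singleton hbL
  have d020 : dist (![0, 2] : M) ![0, 0] = 2 := by
    rw [dist_fin2]; norm_num
  have d010 : dist (![0, 1] : M) ![0, 0] = 1 := by
    rw [dist_fin2]; norm_num
  have h3 : Metric.hausdorffDist (C K) (C L) = 2 := by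
    rw [hCK, hCL]
    apply le_antisymm
    · apply Metric.hausdorffDist_le_of_mem_dist (by norm_num)
      · rintro x rfl
        exact ⟨![0, 0], hm00, by rw [dist_self]; norm_num⟩
      · intro y hy
        refine ⟨![0, 0], rfl, ?_⟩
        rw [dist_fin2, hy.1]
        simp only [Matrix.cons_val_zero, Matrix.cons_val_one, Matrix.head_cons, sub_self,
          abs_zero, sub_zero]
        rw [abs_of_nonneg hy.2.1]
        exact max_le (by norm_num) hy.2.2
    · calc (2 : ℝ) = Metric.infDist (![0, 2] : M) {![0, 0]} := by
            rw [Metric.infDist_singleton, d020]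
        _ ≤ Metric.hausdorffDist S ({![0, 0]} : Set M) :=
            Metric.infDist_le_hausdorffDist_of_mem hm02
              (by rw [Metric.hausdorffEDist_comm]; exact hneS)
        _ = Metric.hausdorffDist ({![0, 0]} : Set M) S := Metric.hausdorffDist_comm
  have h4 : Metric.hausdorffDist K L = 1 := by
    show Metric.hausdorffDist ({![0, 0]} : Set M) L = 1
    apply le_antisymm
    · apply Metric.hausdorffDist_le_of_mem_dist (by norm_num)
      · rintro x rfl
        exact ⟨![0, 1], hm01, by rw [dist_comm, d010]⟩
      · intro y hy
        refine ⟨![0, 0], rfl, ?_⟩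
        rw [dist_fin2, hy.1]
        simp only [Matrix.cons_val_zero, Matrix.cons_val_one, Matrix.head_cons, sub_zero]
        exact max_le (abs_le.2 ⟨hy.2.1, hy.2.2⟩) (by norm_num)
    · calc (1 : ℝ) = Metric.infDist (![0, 1] : M) {![0, 0]} := by
            rw [Metric.infDist_singleton, d010]
        _ ≤ Metric.hausdorffDist L ({![0, 0]} : Set M) :=
            Metric.infDist_le_hausdorffDist_of_mem hm01
              (by rw [Metric.hausdorffEDist_comm]; exact hneL)
        _ = Metric.hausdorffDist ({![0, 0]} : Set M) L := Metric.hausdorffDist_comm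
  exact ⟨hCK, hCL, h3, h4, by rw [h3, h4]; norm_num⟩
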